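/- If u, v ∈ W_i belong to the same set W_i, then δ_G(u,v) = min { δ_i(u,v) , min_{z ∈ T} ( δ_G(u,z) + δ_G(z,v) ) }. -/

import Mathlib

/-- A directed graph on vertex type `V` with integer edge lengths. -/
structure Digraph' (V : Type) where
  Adj : V → V → Prop
  len : V → V → ℤ

namespace Digraph'

variable {V : Type}

/-- Directed walks in `G` from `u` to `v`. -/
inductive Walk (G : Digraph' V) : V → V → Type where
  | nil {u : V} : Walk G u u
  | cons {u v w : V} (h : G.Adj u v) (p : Walk G v w) : Walk G u w

/-- The total length (weight) of a walk: the sum of the lengths of its edges. -/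
def Walk.weight {G : Digraph' V} : {u v : V} → G.Walk u v → ℤ
  | _, _, .nil => 0
  | u, _, .cons (v := x) _ p => G.len u x + Walk.weight p

/-- The list of vertices visited by a walk. -/
def Walk.support {G : Digraph' V} : {u v : V} → G.Walk u v → List V
  | u, _, .nil => [u]
  | u, _, .cons _ p => u :: Walk.support p

/-- The number of edges of a walk. -/
def Walk.edgeCount {G : Digraph' V} : {u v : V} → G.Walk u v → ℕ
  | _, _, .nil => 0
  | _, _, .cons _ p => Walk.edgeCount p + 1

/-- The distance from `u` to `v`: the infimum of the total lengths of directed walks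
from `u` to `v` (`⊤` if there is no such walk). -/
noncomputable def dist (G : Digraph' V) (u v : V) : EReal :=
  ⨅ p : G.Walk u v, ((Walk.weight p : ℝ) : EReal)

/-- The subgraph of `G` induced by a set `S` of vertices. -/
def induce (G : Digraph' V) (S : Set V) : Digraph' V where
  Adj a b := G.Adj a b ∧ a ∈ S ∧ b ∈ S
  len := G.len

end Digraph'

namespace Digraph'


def Walk.append {G : Digraph' V} : {u v w : V} → G.Walk u v → G.Walk v w → G.Walk u w
  | _, _, _, .nil, q => q
  | _, _, _, .cons h p, q => .cons h (p.append q)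

lemma Walk.weight_append {G : Digraph' V} {u v w : V} (p : G.Walk u v) (q : G.Walk v w) :
    (p.append q).weight = p.weight + q.weight := by
  induction p with
  | nil => simp [Walk.append, Walk.weight]
  | cons h p ih => simp [Walk.append, Walk.weight, ih]; ring

lemma Walk.start_mem_support {G : Digraph' V} {u v : V} (p : G.Walk u v) : u ∈ p.support := by
  cases p <;> simp [Walk.support]

lemma Walk.support_ne_nil {G : Digraph' V} {u v : V} (p : G.Walk u v) : p.support ≠ [] := by
  cases p <;> simp [Walk.support]

lemma Walk.length_support {G : Digraph' V} {u v : V} (p : G.Walk u v) :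
    p.support.length = p.edgeCount + 1 := by
  induction p with
  | nil => simp [Walk.support, Walk.edgeCount]
  | cons h p ih => simp [Walk.support, Walk.edgeCount, ih]

lemma Walk.exists_split {G : Digraph' V} : ∀ {x y : V} (p : G.Walk x y) (t : V),
    t ∈ p.support →
    ∃ (q : G.Walk x t) (r : G.Walk t y),
      p.weight = q.weight + r.weight ∧ p.support = q.support.dropLast ++ r.support := by
  intro x y p
  induction p with
  | nil =>
    intro t ht
    simp [Walk.support] at ht
    subst ht
    exact ⟨.nil, .nil, by simp [Walk.weight], by simp [Walk.support]⟩
  | @cons a b c h p ih =>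
    intro t ht
    rcases eq_or_ne t a with rfl | hne
    · exact ⟨.nil, .cons h p, by simp [Walk.weight], by simp [Walk.support]⟩
    · have ht' : t ∈ p.support := by
        simp [Walk.support] at ht
        tauto
      obtain ⟨q, r, hw, hs⟩ := ih t ht'
      refine ⟨.cons h q, r, ?_, ?_⟩
      · simp [Walk.weight, hw]; ring
      · have : (Walk.cons h q).support = a :: q.support := rfl
        rw [this, List.dropLast_cons_of_ne_nil (Walk.support_ne_nil q)]
        simp [Walk.support, hs]

lemma Walk.exists_nodup {G : Digraph' V} (hnoneg : ∀ (x : V) (p : G.Walk x x), 0 ≤ p.weight) :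
    ∀ {x y : V} (p : G.Walk x y), ∃ q : G.Walk x y, q.weight ≤ p.weight ∧ q.support.Nodup := by
  intro x y p
  induction p with
  | nil => exact ⟨.nil, le_rfl, by simp [Walk.support]⟩
  | @cons a b c h p ih =>
    obtain ⟨q, hqw, hqn⟩ := ih
    by_cases ha : a ∈ q.support
    · obtain ⟨q₁, q₂, hw, hs⟩ := Walk.exists_split q a ha
      refine ⟨q₂, ?_, ?_⟩
      · have hcyc : (0 : ℤ) ≤ (Walk.cons h q₁).weight := hnoneg _ _
        have : (Walk.cons h q₁).weight = G.len a b + q₁.weight := rfl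
        simp only [Walk.weight]
        omega
      · have : q₂.support.Sublist q.support := by
          rw [hs]; exact (List.sublist_append_right _ _)
        exact this.nodup hqn
    · refine ⟨.cons h q, ?_, ?_⟩
      · simp only [Walk.weight]; omega
      · simpa [Walk.support, ha] using hqn

lemma Walk.neg_mul_le_weight (G : Digraph' V) (M : ℤ) (hlen : ∀ a b : V, -M ≤ G.len a b) :
    ∀ {x y : V} (p : G.Walk x y), -((p.edgeCount : ℤ) * M) ≤ p.weight := by
  intro x y p
  induction p with
  | nil => simp [Walk.weight, Walk.edgeCount]
  | @cons a b c h p ih =>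
    have := hlen a b
    simp only [Walk.weight, Walk.edgeCount]
    push_cast
    nlinarith [ih]

lemma exists_lowerBound [Fintype V] (G : Digraph' V)
    (hnoneg : ∀ (x : V) (p : G.Walk x x), 0 ≤ p.weight) :
    ∃ C : ℤ, ∀ (x y : V) (p : G.Walk x y), C ≤ p.weight := by
  classical
  set M : ℕ := Finset.univ.sup (fun p : V × V => (G.len p.1 p.2).natAbs) with hM
  have hlen : ∀ a b : V, -(M : ℤ) ≤ G.len a b := by
    intro a b
    have h1 : (G.len a b).natAbs ≤ M :=
      Finset.le_sup (f := fun p : V × V => (G.len p.1 p.2).natAbs) (Finset.mem_univ (a, b))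
    omega
  refine ⟨-((Fintype.card V : ℤ) * M), ?_⟩
  intro x y p
  obtain ⟨q, hqw, hqn⟩ := Walk.exists_nodup hnoneg p
  have hcount : (q.edgeCount : ℤ) ≤ Fintype.card V := by
    have h1 := hqn.length_le_card
    rw [Walk.length_support] at h1
    omega
  have hweight : -((q.edgeCount : ℤ) * M) ≤ q.weight :=
    Walk.neg_mul_le_weight G M hlen q
  have : -((Fintype.card V : ℤ) * M) ≤ -((q.edgeCount : ℤ) * M) := by
    have : (0:ℤ) ≤ M := Int.ofNat_nonneg M
    nlinarith
  omega

lemma dist_le_weight (G : Digraph' V) {x y : V} (p : G.Walk x y) :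
    G.dist x y ≤ ((p.weight : ℝ) : EReal) := iInf_le _ p

lemma coe_lowerBound_le_dist [Fintype V] (G : Digraph' V)
    (hnoneg : ∀ (x : V) (p : G.Walk x x), 0 ≤ p.weight) :
    ∃ C : ℤ, ∀ x y : V, ((C : ℝ) : EReal) ≤ G.dist x y := by
  obtain ⟨C, hC⟩ := exists_lowerBound G hnoneg
  refine ⟨C, fun x y => le_iInf fun p => ?_⟩
  exact_mod_cast hC x y p

lemma dist_ne_bot [Fintype V] (G : Digraph' V)
    (hnoneg : ∀ (x : V) (p : G.Walk x x), 0 ≤ p.weight) (x y : V) :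
    G.dist x y ≠ ⊥ := by
  obtain ⟨C, hC⟩ := coe_lowerBound_le_dist G hnoneg
  exact fun h => absurd (h ▸ hC x y) (by simp)

lemma exists_min [Fintype V] (G : Digraph' V)
    (hnoneg : ∀ (x : V) (p : G.Walk x x), 0 ≤ p.weight) {x y : V}
    (h : Nonempty (G.Walk x y)) :
    ∃ p : G.Walk x y, G.dist x y = ((p.weight : ℝ) : EReal) := by
  obtain ⟨C, hC⟩ := exists_lowerBound G hnoneg
  obtain ⟨lb, ⟨p, hp⟩, hlb⟩ := Int.exists_least_of_bdd
    (P := fun z => ∃ p : G.Walk x y, p.weight = z)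
    ⟨C, fun z ⟨p, hp⟩ => hp ▸ hC x y p⟩ ⟨_, h.some, rfl⟩
  refine ⟨p, le_antisymm (iInf_le _ p) (le_iInf fun q => ?_)⟩
  have : lb ≤ q.weight := hlb _ ⟨q, rfl⟩
  rw [hp]
  exact_mod_cast this

lemma dist_eq_top_of_isEmpty (G : Digraph' V) {x y : V} (h : IsEmpty (G.Walk x y)) :
    G.dist x y = ⊤ := by
  simp [dist, iInf_of_empty]

lemma induce_walk_to (G : Digraph' V) (S : Set V) :
    ∀ {x y : V} (p : (G.induce S).Walk x y), ∃ q : G.Walk x y, q.weight = p.weight := by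
  intro x y p
  induction p with
  | nil => exact ⟨.nil, rfl⟩
  | cons h p ih =>
    obtain ⟨q, hq⟩ := ih
    exact ⟨.cons h.1 q, by simp [Walk.weight, hq, induce]⟩

lemma walk_to_induce (G : Digraph' V) (S : Set V) :
    ∀ {x y : V} (p : G.Walk x y), (∀ w ∈ p.support, w ∈ S) →
      ∃ q : (G.induce S).Walk x y, q.weight = p.weight := by
  intro x y p
  induction p with
  | nil => exact fun _ => ⟨.nil, rfl⟩
  | @cons a b c h p ih =>
    intro hall
    have ha : a ∈ S := hall a (by simp [Walk.support])
    have hb : b ∈ S := hall b (by simp [Walk.support, Walk.start_mem_support p])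
    obtain ⟨q, hq⟩ := ih (fun w hw => hall w (by simp [Walk.support, hw]))
    exact ⟨.cons ⟨h, ha, hb⟩ q, by simp [Walk.weight, induce]; exact hq⟩

lemma exists_T_mem {G : Digraph' V} {k : ℕ} {Vs : Fin k → Set V} {T : Set V}
    (hdelta : ∀ i j : Fin k, i ≠ j → Vs i ∩ Vs j = T)
    (hedge : ∀ u v : V, G.Adj u v → ∃ i, u ∈ Vs i ∧ v ∈ Vs i) (i : Fin k) :
    ∀ {x y : V} (p : G.Walk x y), x ∈ Vs i → (∃ w ∈ p.support, w ∉ Vs i) →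
      ∃ z ∈ T, z ∈ p.support := by
  intro x y p
  induction p with
  | nil =>
    rintro hx ⟨w, hw, hwn⟩
    simp [Walk.support] at hw
    exact absurd (hw ▸ hx) hwn
  | @cons a b c h p ih =>
    rintro ha ⟨w, hw, hwn⟩
    obtain ⟨j, haj, hbj⟩ := hedge _ _ h
    by_cases hb : b ∈ Vs i
    · have hw' : w ∈ p.support := by
        simp [Walk.support] at hw
        rcases hw with rfl | hw
        · exact absurd ha hwn
        · exact hw
      obtain ⟨z, hz, hzs⟩ := ih hb ⟨w, hw', hwn⟩
      exact ⟨z, hz, by simp [Walk.support, hzs]⟩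
    · have hji : j ≠ i := fun hji => hb (hji ▸ hbj)
      have : a ∈ Vs i ∩ Vs j := ⟨ha, haj⟩
      rw [hdelta i j (Ne.symm hji)] at this
      exact ⟨a, this, by simp [Walk.support]⟩

end Digraph'

/-- If `u, v ∈ W_i` belong to the same set `W_i`, then
`δ_G(u,v) = min { δ_i(u,v) , min_{z ∈ T} ( δ_G(u,z) + δ_G(z,v) ) }`. -/
theorem stmt5 {V : Type} [Fintype V] (G : Digraph' V)
    (hnoneg : ∀ (x : V) (p : G.Walk x x), 0 ≤ p.weight)
    (k : ℕ) (hk : 2 ≤ k) (Vs : Fin k → Set V)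
    (hcover : (⋃ i, Vs i) = Set.univ)
    (T : Set V) (hdelta : ∀ i j : Fin k, i ≠ j → Vs i ∩ Vs j = T)
    (hedge : ∀ u v : V, G.Adj u v → ∃ i, u ∈ Vs i ∧ v ∈ Vs i)
    (i : Fin k) (u v : V) (hu : u ∈ Vs i \ T) (hv : v ∈ Vs i \ T) :
    G.dist u v =
      min ((G.induce (Vs i)).dist u v) (⨅ z ∈ T, (G.dist u z + G.dist z v)) := by
  classical
  apply le_antisymm
  · apply le_min
    · refine le_iInf fun p => ?_
      obtain ⟨q, hq⟩ := Digraph'.induce_walk_to G (Vs i) p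
      calc G.dist u v ≤ ((q.weight : ℝ) : EReal) := Digraph'.dist_le_weight G q
        _ = _ := by rw [hq]
    · refine le_iInf₂ fun z hz => ?_
      by_cases h1 : Nonempty (G.Walk u z)
      · by_cases h2 : Nonempty (G.Walk z v)
        · obtain ⟨p, hp⟩ := Digraph'.exists_min G hnoneg h1
          obtain ⟨q, hq⟩ := Digraph'.exists_min G hnoneg h2
          rw [hp, hq]
          calc G.dist u v ≤ (((p.append q).weight : ℝ) : EReal) :=
                Digraph'.dist_le_weight G _
            _ = ((p.weight : ℝ) : EReal) + ((q.weight : ℝ) : EReal) := by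
                rw [Digraph'.Walk.weight_append]; push_cast; rfl
        · have h2' : G.dist z v = ⊤ := Digraph'.dist_eq_top_of_isEmpty G (not_nonempty_iff.mp h2)
          rw [h2', EReal.add_top_of_ne_bot (Digraph'.dist_ne_bot G hnoneg u z)]
          exact le_top
      · have h1' : G.dist u z = ⊤ := Digraph'.dist_eq_top_of_isEmpty G (not_nonempty_iff.mp h1)
        rw [h1', EReal.top_add_of_ne_bot (Digraph'.dist_ne_bot G hnoneg z v)]
        exact le_top
  · refine le_iInf fun p => ?_
    by_cases hall : ∀ w ∈ p.support, w ∈ Vs i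
    · obtain ⟨q, hq⟩ := Digraph'.walk_to_induce G (Vs i) p hall
      calc min ((G.induce (Vs i)).dist u v) (⨅ z ∈ T, (G.dist u z + G.dist z v))
          ≤ (G.induce (Vs i)).dist u v := min_le_left _ _
        _ ≤ ((q.weight : ℝ) : EReal) := Digraph'.dist_le_weight _ q
        _ = _ := by rw [hq]
    · push_neg at hall
      obtain ⟨z, hzT, hzs⟩ := Digraph'.exists_T_mem hdelta hedge i p hu.1
        (by obtain ⟨w, hw1, hw2⟩ := hall; exact ⟨w, hw1, hw2⟩)
      obtain ⟨q, r, hw, _⟩ := Digraph'.Walk.exists_split p z hzs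
      calc min ((G.induce (Vs i)).dist u v) (⨅ z ∈ T, (G.dist u z + G.dist z v))
          ≤ ⨅ z ∈ T, (G.dist u z + G.dist z v) := min_le_right _ _
        _ ≤ G.dist u z + G.dist z v := iInf₂_le z hzT
        _ ≤ ((q.weight : ℝ) : EReal) + ((r.weight : ℝ) : EReal) :=
            add_le_add (Digraph'.dist_le_weight G q) (Digraph'.dist_le_weight G r)
        _ = ((p.weight : ℝ) : EReal) := by rw [hw]; push_cast; rfl
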